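/- For a graph inverse semigroup G(E) the following statements are equivalent: (1) the multiplication of G(E) is jointly continuous with respect to the topology τ_c; (2) for each nonzero element uv⁻¹ ∈ G(E), the set M_{uv⁻¹} = {(ab⁻¹, cd⁻¹) ∈ G(E) × G(E) : ab⁻¹ · cd⁻¹ = uv⁻¹} is finite; (3) for each vertex e ∈ E⁰, the set I_e = {u ∈ Path(E) : r(u) = e} is finite; (4) G(E) contains no subsemigroup isomorphic to the bicyclic monoid and no subsemigroup isomorphic to the semigroup of ω×ω-matrix units; (5) for each vertex e ∈ E⁰, the set D_e = {uv⁻¹ ∈ G(E) : r(u) = r(v) = e} (the Green's D-class of e in G(E)) is finite. -/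

import Mathlib

/-! Preamble: graph inverse semigroups and compactness-type properties. -/

namespace GISPaper

variable {V E : Type*}

/-- `IsPathFrom src rng v l` means that the list of edges `l` is composable
and starts at the vertex `v`. -/
def IsPathFrom (src rng : E → V) : V → List E → Prop
  | _, [] => True
  | v, e :: l => src e = v ∧ IsPathFrom src rng (rng e) l

/-- The end vertex of a list of edges starting at the vertex `v`. -/
def pathEnd (rng : E → V) : V → List E → V
  | v, [] => v
  | _, e :: l => pathEnd rng (rng e) l

theorem pathEnd_append (rng : E → V) (v : V) (l₁ l₂ : List E) :
    pathEnd rng v (l₁ ++ l₂) = pathEnd rng (pathEnd rng v l₁) l₂ := by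
  induction l₁ generalizing v with
  | nil => rfl
  | cons e l ih => simpa [pathEnd] using ih (rng e)

theorem isPathFrom_append (src rng : E → V) (v : V) (l₁ l₂ : List E) :
    IsPathFrom src rng v (l₁ ++ l₂) ↔
      IsPathFrom src rng v l₁ ∧ IsPathFrom src rng (pathEnd rng v l₁) l₂ := by
  induction l₁ generalizing v with
  | nil => simp [IsPathFrom, pathEnd]
  | cons e l ih => simp [IsPathFrom, pathEnd, ih (rng e), and_assoc]

/-- A (directed) path in the graph `(V, E, src, rng)`: a starting vertex together
with a composable list of edges (a path of length zero is just a vertex). -/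
structure GPath (src rng : E → V) where
  start : V
  edges : List E
  isPath : IsPathFrom src rng start edges

/-- The range (end vertex) of a path. -/
def GPath.range {src rng : E → V} (p : GPath src rng) : V :=
  pathEnd rng p.start p.edges

/-- The nonzero elements of the graph inverse semigroup: pairs `u v⁻¹` of paths
with `r u = r v`. -/
def GISElem (src rng : E → V) : Type _ :=
  {p : GPath src rng × GPath src rng // p.1.range = p.2.range}

/-- The graph inverse semigroup over the graph `(V, E, src, rng)`: the nonzero
elements `u v⁻¹` together with a zero element (represented by `none`). -/
def GIS (src rng : E → V) : Type _ := Option (GISElem src rng)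

instance {src rng : E → V} : Zero (GIS src rng) :=
  ⟨(none : Option (GISElem src rng))⟩

open Classical in
/-- The multiplication of a graph inverse semigroup:
`u₁v₁⁻¹ · u₂v₂⁻¹ = u₁w v₂⁻¹` if `u₂ = v₁ w`, `u₁v₁⁻¹ · u₂v₂⁻¹ = u₁ (v₂ w)⁻¹` if
`v₁ = u₂ w`, and `0` otherwise; `0` is absorbing. -/
noncomputable def GIS.mul {src rng : E → V} :
    Option (GISElem src rng) → Option (GISElem src rng) → Option (GISElem src rng)
  | some ⟨(u₁, v₁), h₁⟩, some ⟨(u₂, v₂), h₂⟩ =>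
    if h : v₁.start = u₂.start ∧ v₁.edges <+: u₂.edges then
      some ⟨(⟨u₁.start, u₁.edges ++ u₂.edges.drop v₁.edges.length, by
        obtain ⟨hs, t, ht⟩ := h
        have hdrop : u₂.edges.drop v₁.edges.length = t := by
          rw [← ht, List.drop_left]
        have hu₂ := u₂.isPath
        rw [← ht, isPathFrom_append] at hu₂
        rw [hdrop, isPathFrom_append]
        refine ⟨u₁.isPath, ?_⟩
        have he : pathEnd rng u₁.start u₁.edges = pathEnd rng u₂.start v₁.edges := by
          rw [← hs]; exact h₁
        rw [he]; exact hu₂.2⟩, v₂), by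
        show pathEnd rng u₁.start (u₁.edges ++ u₂.edges.drop v₁.edges.length) = v₂.range
        obtain ⟨hs, t, ht⟩ := h
        have hdrop : u₂.edges.drop v₁.edges.length = t := by
          rw [← ht, List.drop_left]
        rw [hdrop, pathEnd_append]
        have he : pathEnd rng u₁.start u₁.edges = pathEnd rng u₂.start v₁.edges := by
          rw [← hs]; exact h₁
        rw [he, ← pathEnd_append, ht]
        exact h₂⟩
    else if h' : u₂.start = v₁.start ∧ u₂.edges <+: v₁.edges then
      some ⟨(u₁, ⟨v₂.start, v₂.edges ++ v₁.edges.drop u₂.edges.length, by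
        obtain ⟨hs, t, ht⟩ := h'
        have hdrop : v₁.edges.drop u₂.edges.length = t := by
          rw [← ht, List.drop_left]
        have hv₁ := v₁.isPath
        rw [← ht, isPathFrom_append] at hv₁
        rw [hdrop, isPathFrom_append]
        refine ⟨v₂.isPath, ?_⟩
        have he : pathEnd rng v₂.start v₂.edges = pathEnd rng v₁.start u₂.edges := by
          rw [← hs]; exact h₂.symm
        rw [he]; exact hv₁.2⟩), by
        show u₁.range = pathEnd rng v₂.start (v₂.edges ++ v₁.edges.drop u₂.edges.length)
        obtain ⟨hs, t, ht⟩ := h'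
        have hdrop : v₁.edges.drop u₂.edges.length = t := by
          rw [← ht, List.drop_left]
        have he : pathEnd rng v₂.start v₂.edges = pathEnd rng v₁.start u₂.edges := by
          rw [← hs]; exact h₂.symm
        rw [hdrop, pathEnd_append, he, ← pathEnd_append, ht]
        exact h₁⟩
    else none
  | _, _ => none

noncomputable instance {src rng : E → V} : Mul (GIS src rng) := ⟨GIS.mul⟩

theorem GIS.zero_mul {src rng : E → V} (x : GIS src rng) : 0 * x = 0 := rfl

/-- The topology in which every nonzero point is isolated and the open
neighbourhoods of `0` are exactly the cofinite sets containing `0`. -/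
def tauC (α : Type*) [Zero α] : TopologicalSpace α where
  IsOpen U := (0 : α) ∈ U → Uᶜ.Finite
  isOpen_univ := by simp
  isOpen_inter U W hU hW h := by
    rw [Set.compl_inter]
    exact (hU h.1).union (hW h.2)
  isOpen_sUnion 𝒮 h h0 := by
    obtain ⟨U, hU, hU0⟩ := h0
    exact (h U hU hU0).subset (Set.compl_subset_compl.mpr (Set.subset_sUnion_of_mem hU))

/-- A topological space is CLP-compact if every cover by clopen sets has a
finite subcover. -/
def CLPCompact (X : Type*) [TopologicalSpace X] : Prop :=
  ∀ 𝒰 : Set (Set X), (∀ U ∈ 𝒰, IsClopen U) → ⋃₀ 𝒰 = Set.univ →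
    ∃ ℱ ⊆ 𝒰, ℱ.Finite ∧ ⋃₀ ℱ = Set.univ

/-- A topological space is countably compact if every infinite subset has an
accumulation point. -/
def CountablyCompactSpace (X : Type*) [TopologicalSpace X] : Prop :=
  ∀ B : Set X, B.Infinite → ∃ x : X, AccPt x (Filter.principal B)

/-- A topological space is feebly compact if every locally finite family of
nonempty open sets is finite. -/
def FeeblyCompact (X : Type*) [TopologicalSpace X] : Prop :=
  ∀ 𝒰 : Set (Set X), (∀ U ∈ 𝒰, IsOpen U ∧ U.Nonempty) →
    (∀ x : X, ∃ N ∈ nhds x, {U ∈ 𝒰 | (U ∩ N).Nonempty}.Finite) → 𝒰.Finite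

/-- The multiplication of the bicyclic monoid on `ℕ × ℕ`. -/
def bicyclicMul (x y : ℕ × ℕ) : ℕ × ℕ :=
  (x.1 + y.1 - min x.2 y.1, x.2 + y.2 - min x.2 y.1)

/-- The multiplication of the semigroup of `X × X`-matrix units (with zero `none`). -/
def matUnitsMul {X : Type*} [DecidableEq X] :
    Option (X × X) → Option (X × X) → Option (X × X)
  | some (a, b), some (c, d) => if b = c then some (a, d) else none
  | _, _ => none

/-- A cycle based at the vertex `e`: a path of nonzero length from `e` to `e`. -/
def HasCycleAt (src rng : E → V) (e : V) : Prop :=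
  ∃ p : GPath src rng, p.edges ≠ [] ∧ p.start = e ∧ p.range = e

end GISPaper

namespace GISPaper

variable {V E : Type*}

variable {src rng : E → V}

theorem GPath.ext' {p q : GPath src rng} (h1 : p.start = q.start) (h2 : p.edges = q.edges) :
    p = q := by
  cases p; cases q; cases h1; cases h2; rfl

/-- Constructor for nonzero elements. -/
def el (u v : GPath src rng) (h : u.range = v.range) : GIS src rng := some ⟨(u, v), h⟩

theorem el_injective {u v u' v' : GPath src rng} {h : u.range = v.range}
    {h' : u'.range = v'.range} (he : el u v h = el u' v' h') : u = u' ∧ v = v' := by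
  have := Option.some_injective _ he
  have h2 := congrArg Subtype.val this
  exact ⟨congrArg Prod.fst h2, congrArg Prod.snd h2⟩

theorem el_ne_zero {u v : GPath src rng} {h : u.range = v.range} : el u v h ≠ 0 :=
  Option.some_ne_none _

theorem mul_def (a b : GIS src rng) : a * b = GIS.mul a b := rfl

theorem GIS.mul_zero (x : GIS src rng) : x * 0 = 0 := by
  rw [mul_def]
  cases x with
  | none => rfl
  | some a => obtain ⟨⟨u, v⟩, h⟩ := a; rfl

theorem mul_case1 (u₁ v₁ : GPath src rng) (h₁ : u₁.range = v₁.range)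
    (u₂ v₂ : GPath src rng) (h₂ : u₂.range = v₂.range)
    (hs : v₁.start = u₂.start) (hp : v₁.edges <+: u₂.edges) :
    ∃ z : GISElem src rng,
      el u₁ v₁ h₁ * el u₂ v₂ h₂ = some z ∧
      z.1.1.start = u₁.start ∧
      z.1.1.edges = u₁.edges ++ u₂.edges.drop v₁.edges.length ∧ z.1.2 = v₂ := by
  rw [mul_def, el, el, GIS.mul, dif_pos ⟨hs, hp⟩]
  exact ⟨_, rfl, rfl, rfl, rfl⟩

theorem mul_case2 (u₁ v₁ : GPath src rng) (h₁ : u₁.range = v₁.range)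
    (u₂ v₂ : GPath src rng) (h₂ : u₂.range = v₂.range)
    (hs : u₂.start = v₁.start) (hp : u₂.edges <+: v₁.edges) :
    ∃ z : GISElem src rng,
      el u₁ v₁ h₁ * el u₂ v₂ h₂ = some z ∧
      z.1.1 = u₁ ∧ z.1.2.start = v₂.start ∧
      z.1.2.edges = v₂.edges ++ v₁.edges.drop u₂.edges.length := by
  rw [mul_def, el, el, GIS.mul]
  by_cases hc : v₁.start = u₂.start ∧ v₁.edges <+: u₂.edges
  · have he : v₁.edges = u₂.edges := hc.2.eq_of_length_le hp.length_le
    rw [dif_pos hc]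
    refine ⟨_, rfl, ?_, rfl, ?_⟩
    · refine GPath.ext' rfl ?_
      simp [he, List.drop_length]
    · simp [← he, List.drop_length]
  · rw [dif_neg hc, dif_pos ⟨hs, hp⟩]
    exact ⟨_, rfl, rfl, rfl, rfl⟩

theorem mul_case0 (u₁ v₁ : GPath src rng) (h₁ : u₁.range = v₁.range)
    (u₂ v₂ : GPath src rng) (h₂ : u₂.range = v₂.range)
    (hc : ¬(v₁.start = u₂.start ∧ v₁.edges <+: u₂.edges))
    (hc' : ¬(u₂.start = v₁.start ∧ u₂.edges <+: v₁.edges)) :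
    el u₁ v₁ h₁ * el u₂ v₂ h₂ = 0 := by
  rw [mul_def, el, el, GIS.mul, dif_neg hc, dif_neg hc']
  rfl

theorem mul_inversion {a b : GIS src rng} {z : GISElem src rng} (h : a * b = some z) :
    ∃ (u₁ v₁ : GPath src rng) (h₁ : u₁.range = v₁.range)
      (u₂ v₂ : GPath src rng) (h₂ : u₂.range = v₂.range),
      a = el u₁ v₁ h₁ ∧ b = el u₂ v₂ h₂ ∧
      ((v₁.start = u₂.start ∧ v₁.edges <+: u₂.edges ∧ z.1.1.start = u₁.start ∧
          z.1.1.edges = u₁.edges ++ u₂.edges.drop v₁.edges.length ∧ z.1.2 = v₂) ∨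
       (u₂.start = v₁.start ∧ u₂.edges <+: v₁.edges ∧ z.1.1 = u₁ ∧
          z.1.2.start = v₂.start ∧
          z.1.2.edges = v₂.edges ++ v₁.edges.drop u₂.edges.length)) := by
  match a, b with
  | none, b => exact (Option.some_ne_none z ((GIS.zero_mul b).symm.trans h).symm).elim
  | some a, none => exact (Option.some_ne_none z ((GIS.mul_zero (some a)).symm.trans h).symm).elim
  | some ⟨(u₁, v₁), h₁⟩, some ⟨(u₂, v₂), h₂⟩ =>
    refine ⟨u₁, v₁, h₁, u₂, v₂, h₂, rfl, rfl, ?_⟩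
    by_cases hc : v₁.start = u₂.start ∧ v₁.edges <+: u₂.edges
    · obtain ⟨z', hz', e1, e2, e3⟩ := mul_case1 u₁ v₁ h₁ u₂ v₂ h₂ hc.1 hc.2
      have hzz : z' = z := Option.some_injective _ (hz'.symm.trans h)
      subst hzz
      exact Or.inl ⟨hc.1, hc.2, e1, e2, e3⟩
    · by_cases hc' : u₂.start = v₁.start ∧ u₂.edges <+: v₁.edges
      · obtain ⟨z', hz', e1, e2, e3⟩ := mul_case2 u₁ v₁ h₁ u₂ v₂ h₂ hc'.1 hc'.2
        have hzz : z' = z := Option.some_injective _ (hz'.symm.trans h)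
        subst hzz
        exact Or.inr ⟨hc'.1, hc'.2, e1, e2, e3⟩
      · exact (Option.some_ne_none z
          (((mul_case0 u₁ v₁ h₁ u₂ v₂ h₂ hc hc').symm.trans h)).symm).elim

/-- The idempotent `u u⁻¹`. -/
def idem (u : GPath src rng) : GIS src rng := el u u rfl

theorem idem_injective {u v : GPath src rng} (h : idem u = idem v) : u = v :=
  (el_injective h).1

/-- Nonzero idempotents have the form `u u⁻¹`. -/
theorem eq_idem_of_idempotent {u v : GPath src rng} {h : u.range = v.range}
    (hx : el u v h * el u v h = el u v h) : v = u := by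
  obtain ⟨u₁, v₁, h₁, u₂, v₂, h₂, ha, hb, hcase⟩ := mul_inversion hx
  obtain ⟨e1, e2⟩ := el_injective ha
  obtain ⟨e3, e4⟩ := el_injective hb
  subst e1; subst e2; subst e3; subst e4
  rcases hcase with ⟨hs, hp, _, he, _⟩ | ⟨hs, hp, _, _, he⟩
  · have h5 : u.edges = u.edges ++ u.edges.drop v.edges.length := he
    have hd : u.edges.drop v.edges.length = [] := by simpa using h5.symm
    have hlen : u.edges.length ≤ v.edges.length := by
      have := congrArg List.length hd
      simp at this
      omega
    exact GPath.ext' hs (hp.eq_of_length_le hlen)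
  · have h5 : v.edges = v.edges ++ v.edges.drop u.edges.length := he
    have hd : v.edges.drop u.edges.length = [] := by simpa using h5.symm
    have hlen : v.edges.length ≤ u.edges.length := by
      have := congrArg List.length hd
      simp at this
      omega
    exact GPath.ext' hs.symm (hp.eq_of_length_le hlen).symm

theorem left_idem {w u v : GPath src rng} {h : u.range = v.range}
    (hx : idem w * el u v h = el u v h) : w.start = u.start ∧ w.edges <+: u.edges := by
  obtain ⟨u₁, v₁, h₁, u₂, v₂, h₂, ha, hb, hcase⟩ := mul_inversion hx
  obtain ⟨e1, e2⟩ := el_injective ha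
  obtain ⟨e3, e4⟩ := el_injective hb
  subst e1; subst e2; subst e3; subst e4
  rcases hcase with ⟨hs, hp, _, _, _⟩ | ⟨hs, hp, he, _, _⟩
  · exact ⟨hs, hp⟩
  · have h5 : u = w := he
    rw [← h5]
    exact ⟨rfl, List.prefix_refl _⟩

theorem right_idem {w u v : GPath src rng} {h : u.range = v.range}
    (hx : el u v h * idem w = el u v h) : w.start = v.start ∧ w.edges <+: v.edges := by
  obtain ⟨u₁, v₁, h₁, u₂, v₂, h₂, ha, hb, hcase⟩ := mul_inversion hx
  obtain ⟨e1, e2⟩ := el_injective ha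
  obtain ⟨e3, e4⟩ := el_injective hb
  subst e1; subst e2; subst e3; subst e4
  rcases hcase with ⟨hs, hp, _, _, he⟩ | ⟨hs, hp, _, _, _⟩
  · have h5 : v = w := he
    rw [h5]
    exact ⟨rfl, List.prefix_refl _⟩
  · exact ⟨hs, hp⟩

theorem sandwich {p q p' q' u w : GPath src rng} {h : p.range = q.range}
    {h' : p'.range = q'.range}
    (hup : u.edges <+: p.edges) (huq' : u.edges <+: q'.edges)
    (hxy : el p q h * el p' q' h' = idem u)
    (hyx : el p' q' h' * el p q h = idem w) :
    p = u ∧ q = w := by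
  have hxy' : el p q h * el p' q' h' = some ⟨(u, u), rfl⟩ := hxy
  obtain ⟨u₁, v₁, h₁, u₂, v₂, h₂, ha, hb, hcase⟩ := mul_inversion hxy'
  obtain ⟨e1, e2⟩ := el_injective ha
  obtain ⟨e3, e4⟩ := el_injective hb
  subst e1; subst e2; subst e3; subst e4
  have key : p = u ∧ q = p' ∧ q' = u := by
    rcases hcase with ⟨hs, hp, f1, f2, f3⟩ | ⟨hs, hp, f1, f2, f3⟩
    · have f1' : u.start = p.start := f1
      have f2' : u.edges = p.edges ++ p'.edges.drop q.edges.length := f2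
      have f3' : (u : GPath src rng) = q' := f3
      have hplen : p.edges.length ≤ u.edges.length := by
        have := congrArg List.length f2'
        simp at this
        omega
      have hue : u.edges = p.edges := hup.eq_of_length_le hplen
      have hdrop : p'.edges.drop q.edges.length = [] := by
        rw [hue] at f2'
        simpa using f2'.symm
      have hlen2 : p'.edges.length ≤ q.edges.length := by
        have := congrArg List.length hdrop
        simp at this
        omega
      exact ⟨GPath.ext' f1'.symm hue.symm, GPath.ext' hs (hp.eq_of_length_le hlen2),
        f3'.symm⟩
    · have f1' : (u : GPath src rng) = p := f1
      have f2' : u.start = q'.start := f2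
      have f3' : u.edges = q'.edges ++ q.edges.drop p'.edges.length := f3
      have hqlen : q'.edges.length ≤ u.edges.length := by
        have := congrArg List.length f3'
        simp at this
        omega
      have hue : u.edges = q'.edges := huq'.eq_of_length_le hqlen
      have hdrop : q.edges.drop p'.edges.length = [] := by
        rw [hue] at f3'
        simpa using f3'.symm
      have hlen2 : q.edges.length ≤ p'.edges.length := by
        have := congrArg List.length hdrop
        simp at this
        omega
      exact ⟨f1'.symm, GPath.ext' hs.symm (hp.eq_of_length_le hlen2).symm,
        GPath.ext' f2'.symm hue.symm⟩
  obtain ⟨hpu, hqp', hq'u⟩ := key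
  refine ⟨hpu, ?_⟩
  have hs2 : q'.start = p.start := by rw [hq'u, hpu]
  have hp2 : q'.edges <+: p.edges := by rw [hq'u, hpu]
  obtain ⟨z2, hz2, -, -, f3⟩ := mul_case1 p' q' h' p q h hs2 hp2
  have hz : z2 = ⟨(w, w), rfl⟩ := Option.some_injective _ (hz2.symm.trans hyx)
  rw [hz] at f3
  exact (f3 : (w : GPath src rng) = q).symm

theorem exists_idem {x : GIS src rng} (hx : x ≠ 0) (hxx : x * x = x) :
    ∃ u, x = idem u := by
  obtain ⟨a, ha⟩ : ∃ a, x = some a := Option.ne_none_iff_exists'.mp hx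
  obtain ⟨⟨p, q⟩, hpq⟩ := a
  subst ha
  have hel : el p q hpq * el p q hpq = el p q hpq := hxx
  have hqp := eq_idem_of_idempotent hel
  obtain rfl := hqp
  exact ⟨_, rfl⟩

theorem el_eq_of {z : GISElem src rng} {u v : GPath src rng} {h : u.range = v.range}
    (h1 : z.1.1.start = u.start) (h2 : z.1.1.edges = u.edges) (h3 : z.1.2 = v) :
    some z = el u v h := by
  obtain ⟨⟨a, b⟩, hz⟩ := z
  have ha : a = u := GPath.ext' h1 h2
  have hb : b = v := h3
  subst ha; subst hb; rfl

theorem el_eq_of' {z : GISElem src rng} {u v : GPath src rng} {h : u.range = v.range}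
    (h1 : z.1.1 = u) (h2 : z.1.2.start = v.start) (h3 : z.1.2.edges = v.edges) :
    some z = el u v h := by
  obtain ⟨⟨a, b⟩, hz⟩ := z
  have ha : a = u := h1
  have hb : b = v := GPath.ext' h2 h3
  subst ha; subst hb; rfl

/-- Powers of a cycle. -/
def cpow (c : List E) : ℕ → List E
  | 0 => []
  | n + 1 => c ++ cpow c n

theorem cpow_length (c : List E) (n : ℕ) : (cpow c n).length = n * c.length := by
  induction n with
  | zero => simp [cpow]
  | succ n ih => simp [cpow, ih]; ring

theorem cpow_add (c : List E) (m n : ℕ) : cpow c (m + n) = cpow c m ++ cpow c n := by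
  induction m with
  | zero => simp [cpow]
  | succ m ih =>
    have : m + 1 + n = (m + n) + 1 := by omega
    rw [this]
    show c ++ cpow c (m + n) = (c ++ cpow c m) ++ cpow c n
    rw [ih, List.append_assoc]

theorem cpow_drop (c : List E) {n k : ℕ} (h : n ≤ k) :
    (cpow c k).drop (cpow c n).length = cpow c (k - n) := by
  conv_lhs => rw [show k = n + (k - n) by omega, cpow_add]
  rw [List.drop_left]

theorem cpow_isPath {c : List E} {e : V} (hc : IsPathFrom src rng e c)
    (hce : pathEnd rng e c = e) (n : ℕ) : IsPathFrom src rng e (cpow c n) := by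
  induction n with
  | zero => trivial
  | succ n ih => exact (isPathFrom_append src rng e c (cpow c n)).2 ⟨hc, hce.symm ▸ ih⟩

theorem cpow_end {c : List E} {e : V} (hce : pathEnd rng e c = e) (n : ℕ) :
    pathEnd rng e (cpow c n) = e := by
  induction n with
  | zero => rfl
  | succ n ih => rw [cpow, pathEnd_append, hce, ih]

theorem pref_finite (w : GPath src rng) :
    {b : GPath src rng | b.start = w.start ∧ b.edges <+: w.edges}.Finite := by
  apply Set.Finite.of_finite_image (f := fun b => b.edges.length)
  · apply (Set.finite_Iic w.edges.length).subset
    rintro - ⟨b, ⟨hs, hp⟩, rfl⟩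
    exact hp.length_le
  · rintro b ⟨hbs, hbp⟩ b' ⟨hbs', hbp'⟩ hl
    refine GPath.ext' (hbs.trans hbs'.symm) ?_
    rw [List.prefix_iff_eq_take.1 hbp, List.prefix_iff_eq_take.1 hbp',
      show b.edges.length = b'.edges.length from hl]

theorem Ie_infinite_of_cycle {e : V} (hc : HasCycleAt src rng e) :
    {u : GPath src rng | u.range = e}.Infinite := by
  obtain ⟨p, hne, hstart, hrange⟩ := hc
  have hc1 : IsPathFrom src rng e p.edges := hstart ▸ p.isPath
  have hc2 : pathEnd rng e p.edges = e := by
    have : p.range = e := hrange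
    rw [GPath.range, hstart] at this
    exact this
  refine Set.infinite_of_injective_forall_mem
    (f := fun n => (⟨e, cpow p.edges n, cpow_isPath hc1 hc2 n⟩ : GPath src rng)) ?_ ?_
  · intro a b hab
    have := congrArg (fun q : GPath src rng => q.edges.length) hab
    simp only [cpow_length] at this
    exact Nat.eq_of_mul_eq_mul_right (List.length_pos_iff.2 hne) this
  · intro n
    exact cpow_end hc2 n

theorem cycle_of_proper_prefix {u₀ u₁ : GPath src rng} (hs : u₀.start = u₁.start)
    (hp : u₀.edges <+: u₁.edges) (hne : u₀ ≠ u₁) (hr : u₀.range = u₁.range) :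
    HasCycleAt src rng u₀.range := by
  obtain ⟨t, ht⟩ := hp
  have htne : t ≠ [] := by
    rintro rfl
    exact hne (GPath.ext' hs (by simpa using ht))
  have h1 := u₁.isPath
  rw [← ht, ← hs] at h1
  rw [isPathFrom_append] at h1
  refine ⟨⟨u₀.range, t, h1.2⟩, htne, rfl, ?_⟩
  show pathEnd rng u₀.range t = u₀.range
  have h2 : u₁.range = pathEnd rng u₀.range t := by
    rw [GPath.range, ← ht, ← hs, pathEnd_append]; rfl
  rw [← h2, hr]

theorem no_bicyclic (h3 : ∀ e : V, {u : GPath src rng | u.range = e}.Finite) :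
    ¬ ∃ f : ℕ × ℕ → GIS src rng, Function.Injective f ∧
        ∀ x y : ℕ × ℕ, f (bicyclicMul x y) = f x * f y := by
  rintro ⟨f, hinj, hmul⟩
  -- diagonal values are nonzero
  have hdiag : ∀ n, f (n, n) ≠ 0 := by
    intro n h0
    have h1 : f (n + 1, n + 1) = f (n, n) * f (n + 1, n + 1) := by
      have := hmul (n, n) (n + 1, n + 1)
      have he : bicyclicMul (n, n) (n + 1, n + 1) = (n + 1, n + 1) := by
        simp only [bicyclicMul, Prod.mk.injEq]
        omega
      rwa [he] at this
    rw [h0, GIS.zero_mul] at h1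
    exact (by omega : (n + 1 : ℕ) ≠ n) (congrArg Prod.fst (hinj (h1.trans h0.symm)))
  have hidem : ∀ n, f (n, n) * f (n, n) = f (n, n) := by
    intro n
    have := hmul (n, n) (n, n)
    have he : bicyclicMul (n, n) (n, n) = (n, n) := by
      simp only [bicyclicMul, Prod.mk.injEq]
      omega
    rw [he] at this
    exact this.symm
  obtain ⟨u₀, hu₀⟩ := exists_idem (hdiag 0) (hidem 0)
  obtain ⟨u₁, hu₁⟩ := exists_idem (hdiag 1) (hidem 1)
  -- u₀ is a prefix of u₁
  have h01 : idem u₀ * idem u₁ = idem u₁ := by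
    have := hmul (0, 0) (1, 1)
    have he : bicyclicMul (0, 0) (1, 1) = (1, 1) := by decide
    rw [he, hu₀, hu₁] at this
    exact this.symm
  have hpref : u₀.start = u₁.start ∧ u₀.edges <+: u₁.edges := left_idem h01
  have hne : u₀ ≠ u₁ := by
    rintro rfl
    exact (by decide : ((0 : ℕ), (0 : ℕ)) ≠ (1, 1)) (hinj (hu₀.trans hu₁.symm))
  -- the element a = f (0, 1) and b = f (1, 0)
  have ha0 : f (0, 1) ≠ 0 := by
    intro h0
    have h2 : f (0, 2) = 0 := by
      have := hmul (0, 1) (0, 1)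
      have he : bicyclicMul (0, 1) (0, 1) = (0, 2) := by decide
      rw [he, h0, GIS.zero_mul] at this
      exact this
    have h3' : f (0, 3) = 0 := by
      have := hmul (0, 1) (0, 2)
      have he : bicyclicMul (0, 1) (0, 2) = (0, 3) := by decide
      rw [he, h0, GIS.zero_mul] at this
      exact this
    exact (by decide : ((0 : ℕ), (2 : ℕ)) ≠ (0, 3)) (hinj (h2.trans h3'.symm))
  have hb0 : f (1, 0) ≠ 0 := by
    intro h0
    have h2 : f (2, 0) = 0 := by
      have := hmul (1, 0) (1, 0)
      have he : bicyclicMul (1, 0) (1, 0) = (2, 0) := by decide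
      rw [he, h0, GIS.mul_zero] at this
      exact this
    have h3' : f (3, 0) = 0 := by
      have := hmul (2, 0) (1, 0)
      have he : bicyclicMul (2, 0) (1, 0) = (3, 0) := by decide
      rw [he, h2, GIS.zero_mul] at this
      exact this
    exact (by decide : ((2 : ℕ), (0 : ℕ)) ≠ (3, 0)) (hinj (h2.trans h3'.symm))
  obtain ⟨⟨⟨p, q⟩, h⟩, ha⟩ : ∃ a, f (0, 1) = some a := Option.ne_none_iff_exists'.mp ha0
  obtain ⟨⟨⟨p', q'⟩, h'⟩, hb⟩ : ∃ a, f (1, 0) = some a := Option.ne_none_iff_exists'.mp hb0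
  have ha : f (0, 1) = el p q h := ha
  have hb : f (1, 0) = el p' q' h' := hb
  -- relations
  have r1 : idem u₀ * el p q h = el p q h := by
    have := hmul (0, 0) (0, 1)
    have he : bicyclicMul (0, 0) (0, 1) = (0, 1) := by decide
    rw [he, hu₀, ha] at this
    exact this.symm
  have r2 : el p' q' h' * idem u₀ = el p' q' h' := by
    have := hmul (1, 0) (0, 0)
    have he : bicyclicMul (1, 0) (0, 0) = (1, 0) := by decide
    rw [he, hu₀, hb] at this
    exact this.symm
  have r3 : el p q h * el p' q' h' = idem u₀ := by
    have := hmul (0, 1) (1, 0)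
    have he : bicyclicMul (0, 1) (1, 0) = (0, 0) := by decide
    rw [he, hu₀, ha, hb] at this
    exact this.symm
  have r4 : el p' q' h' * el p q h = idem u₁ := by
    have := hmul (1, 0) (0, 1)
    have he : bicyclicMul (1, 0) (0, 1) = (1, 1) := by decide
    rw [he, hu₁, ha, hb] at this
    exact this.symm
  obtain ⟨hpu, hqw⟩ := sandwich (left_idem r1).2 (right_idem r2).2 r3 r4
  have hrange : u₀.range = u₁.range := by rw [← hpu, ← hqw]; exact h
  exact (h3 u₀.range).not_infinite
    (Ie_infinite_of_cycle (cycle_of_proper_prefix hpref.1 hpref.2 hne hrange))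

theorem no_matrix (h3 : ∀ e : V, {u : GPath src rng | u.range = e}.Finite) :
    ¬ ∃ f : Option (ℕ × ℕ) → GIS src rng, Function.Injective f ∧
        ∀ x y : Option (ℕ × ℕ), f (matUnitsMul x y) = f x * f y := by
  rintro ⟨f, hinj, hmul⟩
  have hzz : f none * f none = f none := by
    have := hmul none none
    exact this.symm
  -- first: f none = 0
  have hz : f none = 0 := by
    by_contra hz0
    have hd0 : ∀ n : ℕ, f (some (n, n)) ≠ 0 := by
      intro n h0
      have := hmul (some (n, n)) (some (n + 1, n + 1))
      have he : matUnitsMul (some (n, n)) (some (n + 1, n + 1)) = none := by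
        show (if n = n + 1 then _ else none) = none
        rw [if_neg (by omega)]
      rw [he, h0, GIS.zero_mul] at this
      exact hz0 this
    have hdi : ∀ n : ℕ, f (some (n, n)) * f (some (n, n)) = f (some (n, n)) := by
      intro n
      have := hmul (some (n, n)) (some (n, n))
      have he : matUnitsMul (some (n, n)) (some (n, n)) = some (n, n) := by
        simp [matUnitsMul]
      rw [he] at this
      exact this.symm
    have hu : ∀ n : ℕ, ∃ u, f (some (n, n)) = idem u := fun n =>
      exists_idem (hd0 n) (hdi n)
    choose u hu using hu
    obtain ⟨w, hw⟩ := exists_idem hz0 hzz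
    have hprefw : ∀ n, (u n).start = w.start ∧ (u n).edges <+: w.edges := by
      intro n
      have := hmul none (some (n, n))
      have he : matUnitsMul none (some (n, n)) = none := rfl
      rw [he, hw, hu n] at this
      exact right_idem (v := w) this.symm
    have huinj : Function.Injective u := by
      intro a b hab
      have : f (some (a, a)) = f (some (b, b)) := by rw [hu a, hu b, hab]
      have := hinj this
      simpa using congrArg (fun o => (Option.map Prod.fst o).getD 0) this
    exact (pref_finite w).not_infinite
      (Set.infinite_of_injective_forall_mem huinj hprefw)
  -- now f none = 0, all f (some _) nonzero
  have hne0 : ∀ x : ℕ × ℕ, f (some x) ≠ 0 := by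
    intro x h0
    have : some x = none := hinj (h0.trans hz.symm)
    exact Option.some_ne_none _ this
  have hdi : ∀ n : ℕ, f (some (n, n)) * f (some (n, n)) = f (some (n, n)) := by
    intro n
    have := hmul (some (n, n)) (some (n, n))
    have he : matUnitsMul (some (n, n)) (some (n, n)) = some (n, n) := by
      show (if n = n then _ else none) = _
      rw [if_pos rfl]
    rw [he] at this
    exact this.symm
  have hu : ∀ n : ℕ, ∃ u, f (some (n, n)) = idem u := fun n =>
    exists_idem (hne0 _) (hdi n)
  choose u hu using hu
  have huinj : Function.Injective u := by
    intro a b hab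
    have : f (some (a, a)) = f (some (b, b)) := by rw [hu a, hu b, hab]
    have := hinj this
    simpa using congrArg (fun o => (Option.map Prod.fst o).getD 0) this
  -- every u n has the same range as u 0
  have hrange : ∀ n : ℕ, (u n).range = (u 0).range := by
    intro n
    rcases Nat.eq_zero_or_pos n with rfl | hn
    · rfl
    have hn0 : n ≠ 0 := by omega
    obtain ⟨⟨⟨p, q⟩, h⟩, ha⟩ : ∃ a, f (some (0, n)) = some a :=
      Option.ne_none_iff_exists'.mp (hne0 _)
    obtain ⟨⟨⟨p', q'⟩, h'⟩, hb⟩ : ∃ a, f (some (n, 0)) = some a :=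
      Option.ne_none_iff_exists'.mp (hne0 _)
    have ha : f (some (0, n)) = el p q h := ha
    have hb : f (some (n, 0)) = el p' q' h' := hb
    have r1 : idem (u 0) * el p q h = el p q h := by
      have := hmul (some (0, 0)) (some (0, n))
      have he : matUnitsMul (some (0, 0)) (some (0, n)) = some (0, n) := by
        simp [matUnitsMul]
      rw [he, hu 0, ha] at this
      exact this.symm
    have r2 : el p' q' h' * idem (u 0) = el p' q' h' := by
      have := hmul (some (n, 0)) (some (0, 0))
      have he : matUnitsMul (some (n, 0)) (some (0, 0)) = some (n, 0) := by
        simp [matUnitsMul]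
      rw [he, hu 0, hb] at this
      exact this.symm
    have r3 : el p q h * el p' q' h' = idem (u 0) := by
      have := hmul (some (0, n)) (some (n, 0))
      have he : matUnitsMul (some (0, n)) (some (n, 0)) = some (0, 0) := by
        simp [matUnitsMul]
      rw [he, hu 0, ha, hb] at this
      exact this.symm
    have r4 : el p' q' h' * el p q h = idem (u n) := by
      have := hmul (some (n, 0)) (some (0, n))
      have he : matUnitsMul (some (n, 0)) (some (0, n)) = some (n, n) := by
        simp [matUnitsMul]
      rw [he, hu n, ha, hb] at this
      exact this.symm
    obtain ⟨hpu, hqw⟩ := sandwich (left_idem r1).2 (right_idem r2).2 r3 r4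
    rw [← hpu, ← hqw]
    exact h.symm ▸ h
  exact (h3 ((u 0).range)).not_infinite
    (Set.infinite_of_injective_forall_mem huinj hrange)

theorem bicyclic_of_cycle {e : V} (hc : HasCycleAt src rng e) :
    ∃ f : ℕ × ℕ → GIS src rng, Function.Injective f ∧
      ∀ x y : ℕ × ℕ, f (bicyclicMul x y) = f x * f y := by
  obtain ⟨pp, hne, hstart, hrange⟩ := hc
  set c := pp.edges with hc_def
  have hc1 : IsPathFrom src rng e c := hstart ▸ pp.isPath
  have hc2 : pathEnd rng e c = e := by
    have : pp.range = e := hrange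
    rw [GPath.range, hstart] at this
    exact this
  set cp : ℕ → GPath src rng := fun n => ⟨e, cpow c n, cpow_isPath hc1 hc2 n⟩ with hcp
  have hcr : ∀ n, (cp n).range = e := fun n => cpow_end hc2 n
  have cpinj : ∀ a b : ℕ, cp a = cp b → a = b := by
    intro a b hab
    have := congrArg (fun q : GPath src rng => q.edges.length) hab
    simp only [hcp, cpow_length] at this
    exact Nat.eq_of_mul_eq_mul_right (List.length_pos_iff.2 hne) this
  refine ⟨fun x => el (cp x.1) (cp x.2) ((hcr x.1).trans (hcr x.2).symm), ?_, ?_⟩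
  · intro x y hxy
    obtain ⟨h1, h2⟩ := el_injective hxy
    exact Prod.ext (cpinj _ _ h1) (cpinj _ _ h2)
  · rintro ⟨m, n⟩ ⟨k, l⟩
    rcases le_or_gt n k with hnk | hkn
    · have hpref : (cp n).edges <+: (cp k).edges :=
        ⟨cpow c (k - n), by show cpow c n ++ _ = cpow c k; rw [← cpow_add]; congr 1; omega⟩
      obtain ⟨z, hz, g1, g2, g3⟩ := mul_case1 (cp m) (cp n)
        ((hcr m).trans (hcr n).symm) (cp k) (cp l) ((hcr k).trans (hcr l).symm) rfl hpref
      have key : some z = el (cp (m + k - min n k)) (cp (n + l - min n k))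
          ((hcr _).trans (hcr _).symm) := by
        apply el_eq_of
        · exact g1
        · rw [g2]
          show cpow c m ++ (cpow c k).drop (cpow c n).length = cpow c (m + k - min n k)
          rw [cpow_drop c hnk, ← cpow_add]
          congr 1
          omega
        · rw [g3]
          show cp l = cp (n + l - min n k)
          congr 1
          omega
      exact key.symm.trans hz.symm
    · have hpref : (cp k).edges <+: (cp n).edges :=
        ⟨cpow c (n - k), by show cpow c k ++ _ = cpow c n; rw [← cpow_add]; congr 1; omega⟩
      obtain ⟨z, hz, g1, g2, g3⟩ := mul_case2 (cp m) (cp n)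
        ((hcr m).trans (hcr n).symm) (cp k) (cp l) ((hcr k).trans (hcr l).symm) rfl hpref
      have key : some z = el (cp (m + k - min n k)) (cp (n + l - min n k))
          ((hcr _).trans (hcr _).symm) := by
        apply el_eq_of'
        · rw [g1]
          show cp m = cp (m + k - min n k)
          congr 1
          omega
        · exact g2
        · rw [g3]
          show cpow c l ++ (cpow c n).drop (cpow c k).length = cpow c (n + l - min n k)
          rw [cpow_drop c hkn.le, ← cpow_add]
          congr 1
          omega
      exact key.symm.trans hz.symm

theorem matrix_of_incomparable {e : V}
    (hinf : {u : GPath src rng | u.range = e}.Infinite)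
    (hnc : ¬ HasCycleAt src rng e) :
    ∃ f : Option (ℕ × ℕ) → GIS src rng, Function.Injective f ∧
      ∀ x y : Option (ℕ × ℕ), f (matUnitsMul x y) = f x * f y := by
  set emb := hinf.natEmbedding with hemb
  set u : ℕ → GPath src rng := fun n => (emb n).1 with hu
  have hur : ∀ n, (u n).range = e := fun n => (emb n).2
  have uinj : ∀ a b : ℕ, u a = u b → a = b := by
    intro a b hab
    exact emb.injective (Subtype.ext hab)
  have incomp : ∀ {m n : ℕ}, m ≠ n →
      ¬((u m).start = (u n).start ∧ (u m).edges <+: (u n).edges) := by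
    rintro m n hmn ⟨hs, hp⟩
    have hne : u m ≠ u n := fun hh => hmn (uinj _ _ hh)
    have hr : (u m).range = (u n).range := (hur m).trans (hur n).symm
    exact hnc ((hur m) ▸ cycle_of_proper_prefix hs hp hne hr)
  refine ⟨fun o => match o with
    | none => 0
    | some x => el (u x.1) (u x.2) ((hur x.1).trans (hur x.2).symm), ?_, ?_⟩
  · rintro (_ | ⟨a, b⟩) (_ | ⟨a', b'⟩) hab
    · rfl
    · exact absurd hab.symm el_ne_zero
    · exact absurd hab el_ne_zero
    · obtain ⟨h1, h2⟩ := el_injective hab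
      exact congrArg some (Prod.ext (uinj _ _ h1) (uinj _ _ h2))
  · rintro (_ | ⟨m, n⟩) (_ | ⟨k, l⟩)
    · exact (GIS.zero_mul _).symm
    · exact (GIS.zero_mul _).symm
    · exact (GIS.mul_zero _).symm
    · by_cases hnk : n = k
      · subst hnk
        have he : matUnitsMul (some (m, n)) (some (n, l)) = some (m, l) := by
          simp [matUnitsMul]
        rw [he]
        obtain ⟨z, hz, g1, g2, g3⟩ := mul_case1 (u m) (u n)
          ((hur m).trans (hur n).symm) (u n) (u l) ((hur n).trans (hur l).symm) rfl
          (List.prefix_refl _)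
        have key : some z = el (u m) (u l) ((hur m).trans (hur l).symm) := by
          apply el_eq_of
          · exact g1
          · rw [g2]
            simp [List.drop_length]
          · exact g3
        exact key.symm.trans hz.symm
      · have he : matUnitsMul (some (m, n)) (some (k, l)) = none := by
          simp [matUnitsMul, hnk]
        rw [he]
        exact (mul_case0 (u m) (u n) ((hur m).trans (hur n).symm) (u k) (u l)
          ((hur k).trans (hur l).symm) (incomp hnk) (incomp (Ne.symm hnk))).symm

theorem left_factors_finite (h3 : ∀ e : V, {u : GPath src rng | u.range = e}.Finite)
    (w : GPath src rng) :
    {a : GIS src rng | ∃ (a₁ a₂ : GPath src rng) (ha : a₁.range = a₂.range),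
      a = el a₁ a₂ ha ∧ a₁.start = w.start ∧ a₁.edges <+: w.edges}.Finite := by
  apply Set.Finite.of_finite_image
    (f := fun x : GIS src rng => match x with
      | none => ((0 : ℕ), (none : Option (GPath src rng)))
      | some q => (q.1.1.edges.length, some q.1.2))
  · apply Set.Finite.subset
      ((Set.finite_Iic w.edges.length).prod
        ((((Set.finite_Iic w.edges.length).biUnion
          (fun k _ => h3 (pathEnd rng w.start (w.edges.take k)))).image some)))
    rintro - ⟨a, ⟨a₁, a₂, ha, rfl, hs, hp⟩, rfl⟩
    refine ⟨hp.length_le, ⟨a₂, ?_, rfl⟩⟩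
    refine Set.mem_biUnion (show a₁.edges.length ∈ Set.Iic w.edges.length from hp.length_le) ?_
    show a₂.range = _
    rw [← ha, GPath.range, hs, ← List.prefix_iff_eq_take.1 hp]
  · rintro a ⟨a₁, a₂, ha, rfl, hs, hp⟩ b ⟨b₁, b₂, hb, rfl, hs', hp'⟩ heq
    have h1 : a₁.edges.length = b₁.edges.length := congrArg Prod.fst heq
    have h2 : a₂ = b₂ := Option.some_injective _ (congrArg Prod.snd heq)
    have he : a₁ = b₁ := GPath.ext' (hs.trans hs'.symm)
      (by rw [List.prefix_iff_eq_take.1 hp, List.prefix_iff_eq_take.1 hp', h1])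
    cases he; cases h2; rfl

theorem right_factors_finite (h3 : ∀ e : V, {u : GPath src rng | u.range = e}.Finite)
    (w : GPath src rng) :
    {a : GIS src rng | ∃ (a₁ a₂ : GPath src rng) (ha : a₁.range = a₂.range),
      a = el a₁ a₂ ha ∧ a₂.start = w.start ∧ a₂.edges <+: w.edges}.Finite := by
  apply Set.Finite.of_finite_image
    (f := fun x : GIS src rng => match x with
      | none => ((0 : ℕ), (none : Option (GPath src rng)))
      | some q => (q.1.2.edges.length, some q.1.1))
  · apply Set.Finite.subset
      ((Set.finite_Iic w.edges.length).prod
        ((((Set.finite_Iic w.edges.length).biUnion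
          (fun k _ => h3 (pathEnd rng w.start (w.edges.take k)))).image some)))
    rintro - ⟨a, ⟨a₁, a₂, ha, rfl, hs, hp⟩, rfl⟩
    refine ⟨hp.length_le, ⟨a₁, ?_, rfl⟩⟩
    refine Set.mem_biUnion (show a₂.edges.length ∈ Set.Iic w.edges.length from hp.length_le) ?_
    show a₁.range = _
    rw [ha, GPath.range, hs, ← List.prefix_iff_eq_take.1 hp]
  · rintro a ⟨a₁, a₂, ha, rfl, hs, hp⟩ b ⟨b₁, b₂, hb, rfl, hs', hp'⟩ heq
    have h1 : a₂.edges.length = b₂.edges.length := congrArg Prod.fst heq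
    have h2 : a₁ = b₁ := Option.some_injective _ (congrArg Prod.snd heq)
    have he : a₂ = b₂ := GPath.ext' (hs.trans hs'.symm)
      (by rw [List.prefix_iff_eq_take.1 hp, List.prefix_iff_eq_take.1 hp', h1])
    cases he; cases h2; rfl

theorem Mx_finite (h3 : ∀ e : V, {u : GPath src rng | u.range = e}.Finite)
    {x : GIS src rng} (hx : x ≠ 0) :
    {p : GIS src rng × GIS src rng | p.1 * p.2 = x}.Finite := by
  obtain ⟨⟨⟨uu, vv⟩, hx2⟩, rfl⟩ : ∃ a, x = some a := Option.ne_none_iff_exists'.mp hx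
  apply Set.Finite.subset ((left_factors_finite h3 uu).prod (right_factors_finite h3 vv))
  rintro ⟨a, b⟩ hab
  obtain ⟨u₁, v₁, h₁, u₂, v₂, h₂, rfl, rfl, hcase⟩ :=
    mul_inversion (hab : a * b = some ⟨(uu, vv), hx2⟩)
  rcases hcase with ⟨hs, hp, f1, f2, f3⟩ | ⟨hs, hp, f1, f2, f3⟩
  · constructor
    · have f1' : uu.start = u₁.start := f1
      have f2' : uu.edges = u₁.edges ++ u₂.edges.drop v₁.edges.length := f2
      exact ⟨u₁, v₁, h₁, rfl, f1'.symm, ⟨_, f2'.symm⟩⟩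
    · have f3' : (vv : GPath src rng) = v₂ := f3
      exact ⟨u₂, v₂, h₂, rfl, by rw [← f3'], by rw [← f3']⟩
  · constructor
    · have f1' : (uu : GPath src rng) = u₁ := f1
      exact ⟨u₁, v₁, h₁, rfl, by rw [← f1'], by rw [← f1']⟩
    · have f2' : vv.start = v₂.start := f2
      have f3' : vv.edges = v₂.edges ++ v₁.edges.drop u₂.edges.length := f3
      exact ⟨u₂, v₂, h₂, rfl, f2'.symm, ⟨_, f3'.symm⟩⟩

theorem two_to_one
    (h2 : ∀ x : GIS src rng, x ≠ 0 → {p : GIS src rng × GIS src rng | p.1 * p.2 = x}.Finite) :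
    @Continuous _ _ (@instTopologicalSpaceProd _ _ (tauC (GIS src rng)) (tauC (GIS src rng)))
      (tauC (GIS src rng)) (fun p : GIS src rng × GIS src rng => p.1 * p.2) := by
  letI : TopologicalSpace (GIS src rng) := tauC (GIS src rng)
  rw [continuous_def]
  intro U hU
  rw [isOpen_prod_iff]
  intro a b hab
  by_cases h0 : (0 : GIS src rng) ∈ U
  · have hF : Uᶜ.Finite := hU h0
    have hMfin : (⋃ x ∈ Uᶜ, {p : GIS src rng × GIS src rng | p.1 * p.2 = x}).Finite :=
      hF.biUnion (fun x hx => h2 x (by rintro rfl; exact hx h0))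
    set M := ⋃ x ∈ Uᶜ, {p : GIS src rng × GIS src rng | p.1 * p.2 = x} with hM
    refine ⟨(Prod.fst '' M)ᶜ ∪ {a}, (Prod.snd '' M)ᶜ ∪ {b}, ?_, ?_, Or.inr rfl, Or.inr rfl, ?_⟩
    · intro _
      apply Set.Finite.subset (hMfin.image Prod.fst)
      intro y hy
      rw [Set.compl_union, compl_compl] at hy
      exact hy.1
    · intro _
      apply Set.Finite.subset (hMfin.image Prod.snd)
      intro y hy
      rw [Set.compl_union, compl_compl] at hy
      exact hy.1
    · rintro ⟨x, y⟩ ⟨hx, hy⟩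
      show x * y ∈ U
      by_contra hxy
      have hmem : (x, y) ∈ M := Set.mem_biUnion hxy rfl
      rcases hx with hx | hx
      · exact hx ⟨(x, y), hmem, rfl⟩
      · rcases hy with hy | hy
        · exact hy ⟨(x, y), hmem, rfl⟩
        · rw [Set.mem_singleton_iff] at hx hy
          subst hx; subst hy
          exact hxy hab
  · have ha : a ≠ 0 := by
      rintro rfl
      have hh : (0 : GIS src rng) * b ∈ U := hab
      rw [GIS.zero_mul] at hh
      exact h0 hh
    have hb : b ≠ 0 := by
      rintro rfl
      have hh : a * (0 : GIS src rng) ∈ U := hab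
      rw [GIS.mul_zero] at hh
      exact h0 hh
    refine ⟨{a}, {b}, ?_, ?_, rfl, rfl, ?_⟩
    · intro hh
      exact absurd (Set.mem_singleton_iff.1 hh).symm ha
    · intro hh
      exact absurd (Set.mem_singleton_iff.1 hh).symm hb
    · rintro ⟨x, y⟩ ⟨hx, hy⟩
      rw [Set.mem_singleton_iff] at hx hy
      subst hx; subst hy
      exact hab

theorem one_to_three
    (h1 : @Continuous _ _
      (@instTopologicalSpaceProd _ _ (tauC (GIS src rng)) (tauC (GIS src rng)))
      (tauC (GIS src rng)) (fun p : GIS src rng × GIS src rng => p.1 * p.2)) :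
    ∀ e : V, {u : GPath src rng | u.range = e}.Finite := by
  letI : TopologicalSpace (GIS src rng) := tauC (GIS src rng)
  by_contra hcon
  push_neg at hcon
  obtain ⟨e, hinf'⟩ := hcon
  have hinf : {u : GPath src rng | u.range = e}.Infinite := hinf'
  set triv : GPath src rng := ⟨e, [], trivial⟩ with htriv
  set x₀ : GIS src rng := idem triv with hx₀
  have hUopen : IsOpen ({x₀}ᶜ : Set (GIS src rng)) := by
    intro _
    rw [compl_compl]
    exact Set.finite_singleton _
  have hW := continuous_def.mp h1 _ hUopen
  rw [isOpen_prod_iff] at hW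
  have h00 : ((0 : GIS src rng), (0 : GIS src rng)) ∈
      (fun p : GIS src rng × GIS src rng => p.1 * p.2) ⁻¹' {x₀}ᶜ := by
    intro hh
    exact el_ne_zero ((Set.mem_singleton_iff.1 hh).symm.trans (GIS.zero_mul 0))
  obtain ⟨N₁, N₂, hN₁o, hN₂o, h0N₁, h0N₂, hsub⟩ := hW 0 0 h00
  have hN₁c : N₁ᶜ.Finite := hN₁o h0N₁
  have hN₂c : N₂ᶜ.Finite := hN₂o h0N₂
  set S := {u : GPath src rng | u.range = e} with hS
  haveI : Infinite ↥S := hinf.to_subtype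
  set g₁ : ↥S → GIS src rng := fun u => el triv u.1 (u.2.symm : _) with hg₁
  set g₂ : ↥S → GIS src rng := fun u => el u.1 triv (u.2 : _) with hg₂
  have hg₁i : Function.Injective g₁ := fun a b hab =>
    Subtype.ext (el_injective hab).2
  have hg₂i : Function.Injective g₂ := fun a b hab =>
    Subtype.ext (el_injective hab).1
  have hT : ({u : ↥S | g₁ u ∈ N₁ᶜ ∨ g₂ u ∈ N₂ᶜ}).Finite := by
    apply Set.Finite.subset
      ((hN₁c.preimage (hg₁i.injOn)).union (hN₂c.preimage (hg₂i.injOn)))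
    rintro u (hu | hu)
    · exact Or.inl hu
    · exact Or.inr hu
  obtain ⟨u, hu⟩ := hT.infinite_compl.nonempty
  rw [Set.mem_compl_iff, Set.mem_setOf_eq, not_or, Set.notMem_compl_iff,
    Set.notMem_compl_iff] at hu
  have hprod := hsub (show (g₁ u, g₂ u) ∈ N₁ ×ˢ N₂ from ⟨hu.1, hu.2⟩)
  apply hprod
  show g₁ u * g₂ u = x₀
  obtain ⟨z, hz, g1, g2, g3⟩ := mul_case1 triv u.1 (u.2.symm : _) u.1 triv (u.2 : _)
    rfl (List.prefix_refl _)
  have key : some z = x₀ := by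
    apply el_eq_of
    · exact g1
    · rw [g2]
      show ([] : List E) ++ u.1.edges.drop u.1.edges.length = []
      simp [List.drop_length]
    · exact g3
  exact hz.trans key

theorem three_iff_five :
    (∀ e : V, {u : GPath src rng | u.range = e}.Finite) ↔
    (∀ e : V, {x : GIS src rng | ∃ p : GISElem src rng,
      x = some p ∧ p.1.1.range = e}.Finite) := by
  constructor
  · intro h3 e
    apply Set.Finite.of_finite_image
      (f := fun x : GIS src rng => match x with
        | none => (none : Option (GPath src rng × GPath src rng))
        | some q => some q.1)
    · apply Set.Finite.subset (((h3 e).prod (h3 e)).image some)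
      rintro - ⟨x, ⟨p, rfl, hp⟩, rfl⟩
      exact ⟨p.1, ⟨hp, p.2.symm.trans hp⟩, rfl⟩
    · rintro x ⟨p, rfl, hp⟩ y ⟨q, rfl, hq⟩ heq
      have : p.1 = q.1 := Option.some_injective _ heq
      rw [Subtype.ext this]
  · intro h5 e
    apply Set.Finite.of_finite_image
      (f := fun u : GPath src rng => (idem u : GIS src rng))
    · apply Set.Finite.subset (h5 e)
      rintro - ⟨u, hu, rfl⟩
      exact ⟨⟨(u, u), rfl⟩, rfl, hu⟩
    · intro a _ b _ hab
      exact idem_injective hab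

end GISPaper

open GISPaper in
/-- For a graph inverse semigroup `G(E)` the following are equivalent:
(1) the multiplication is jointly continuous w.r.t. `τ_c`;
(2) for each nonzero `uv⁻¹` the set `M_{uv⁻¹} = {(a,c) : a · c = uv⁻¹}` is finite;
(3) for each vertex `e` the set `I_e = {u ∈ Path(E) : r(u) = e}` is finite;
(4) `G(E)` contains no copy of the bicyclic monoid and no copy of the semigroup of
`ω×ω`-matrix units;
(5) each `D`-class `D_e = {uv⁻¹ : r(u) = r(v) = e}` is finite. -/
theorem statement4 {V E : Type*} (src rng : E → V) :
    List.TFAE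
      [@Continuous _ _ (@instTopologicalSpaceProd _ _ (tauC (GIS src rng)) (tauC (GIS src rng)))
          (tauC (GIS src rng)) (fun p : GIS src rng × GIS src rng => p.1 * p.2),
       ∀ x : GIS src rng, x ≠ 0 →
          {p : GIS src rng × GIS src rng | p.1 * p.2 = x}.Finite,
       ∀ e : V, {u : GPath src rng | u.range = e}.Finite,
       (¬ ∃ f : ℕ × ℕ → GIS src rng, Function.Injective f ∧
            ∀ x y : ℕ × ℕ, f (bicyclicMul x y) = f x * f y) ∧
         (¬ ∃ f : Option (ℕ × ℕ) → GIS src rng, Function.Injective f ∧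
            ∀ x y : Option (ℕ × ℕ), f (matUnitsMul x y) = f x * f y),
       ∀ e : V, {x : GIS src rng | ∃ p : GISElem src rng,
          x = some p ∧ p.1.1.range = e}.Finite] := by
  tfae_have 3 → 2 := fun h3 x hx => Mx_finite h3 hx
  tfae_have 2 → 1 := two_to_one
  tfae_have 1 → 3 := one_to_three
  tfae_have 3 → 4 := fun h3 => ⟨no_bicyclic h3, no_matrix h3⟩
  tfae_have 4 → 3 := by
    intro h4
    by_contra hcon
    push_neg at hcon
    obtain ⟨e, hinf'⟩ := hcon
    have hinf : {u : GPath src rng | u.range = e}.Infinite := hinf'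
    by_cases hc : HasCycleAt src rng e
    · exact absurd (bicyclic_of_cycle hc) h4.1
    · exact absurd (matrix_of_incomparable hinf hc) h4.2
  tfae_have 3 ↔ 5 := three_iff_five
  tfae_finish
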